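/- The elements δ_m = i^m j^m of A₀, for m ≥ 1, pairwise commute and are algebraically independent over ℚ; that is, the unital subalgebra of A₀ generated by {i^m j^m : m ≥ 1} is isomorphic to a commutative polynomial ring over ℚ in countably infinitely many variables, one for each m ≥ 1. -/

import Mathlib

open FreeAlgebra

noncomputable section

/-- Defining relations for the specialisation at `q = 0` of the generic composition
algebra of the Kronecker quiver, on generators `i = ι ℚ 0` and `j = ι ℚ 1`:
(1) `i^m j^(m+1) i^(m+1) j^(m+2) = i^(2m+1) j^(2m+3)` for all `m ≥ 0`;
(2) `i^(n+2) j^(n+1) i^(n+1) j^n = i^(2n+3) j^(2n+1)` for all `n ≥ 0`;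
(3) `(i^m j^m)(i^n j^n) = (i^n j^n)(i^m j^m)` for all `m, n ≥ 1`. -/
inductive KroneckerRel0 : FreeAlgebra ℚ (Fin 2) → FreeAlgebra ℚ (Fin 2) → Prop
  | preproj (m : ℕ) :
      KroneckerRel0
        (ι ℚ 0 ^ m * ι ℚ 1 ^ (m + 1) * (ι ℚ 0 ^ (m + 1) * ι ℚ 1 ^ (m + 2)))
        (ι ℚ 0 ^ (2 * m + 1) * ι ℚ 1 ^ (2 * m + 3))
  | preinj (n : ℕ) :
      KroneckerRel0
        (ι ℚ 0 ^ (n + 2) * ι ℚ 1 ^ (n + 1) * (ι ℚ 0 ^ (n + 1) * ι ℚ 1 ^ n))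
        (ι ℚ 0 ^ (2 * n + 3) * ι ℚ 1 ^ (2 * n + 1))
  | deltaComm (m n : ℕ) (hm : 1 ≤ m) (hn : 1 ≤ n) :
      KroneckerRel0
        (ι ℚ 0 ^ m * ι ℚ 1 ^ m * (ι ℚ 0 ^ n * ι ℚ 1 ^ n))
        (ι ℚ 0 ^ n * ι ℚ 1 ^ n * (ι ℚ 0 ^ m * ι ℚ 1 ^ m))

/-- `A₀`, the composition algebra of the Kronecker quiver specialised at `q = 0`,
presented by generators `i, j` and the relations above. -/
abbrev A0 : Type := RingQuot KroneckerRel0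

/-- The generator `i` of `A₀`. -/
def iA : A0 := RingQuot.mkAlgHom ℚ KroneckerRel0 (ι ℚ 0)

/-- The generator `j` of `A₀`. -/
def jA : A0 := RingQuot.mkAlgHom ℚ KroneckerRel0 (ι ℚ 1)

/-- The commutator `ij - ji` in `A₀`. -/
def cA : A0 := iA * jA - jA * iA

/-- `P(m) = (ij - ji)^m j` in `A₀`. -/
def PA (m : ℕ) : A0 := cA ^ m * jA

/-- `I(n) = i (ij - ji)^n` in `A₀`. -/
def IA (n : ℕ) : A0 := iA * cA ^ n

/-- `R(1) = ij - ji` and `R(s+1) = i (ij - ji)^s j` for `s ≥ 1` in `A₀`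
(the value at `0` is junk). -/
def RA : ℕ → A0
  | 0 => 0
  | 1 => cA
  | (s + 2) => iA * cA ^ (s + 1) * jA

/-- `δ_m = i^m j^m` in `A₀`. -/
def deltaA (m : ℕ) : A0 := iA ^ m * jA ^ m


namespace KQAux

abbrev S : Type := Multiset ℕ × ℕ × ℕ

def fJ : S → S
  | (l, 0, _) => (l, 1, 0)
  | (l, p + 1, s) => (l, p + 1 + 1, s)

def fI : S → S
  | (_, 0, _) => (0, 0, 0)
  | (l, 1, s) => (l + {s + 1}, 0, 0)
  | (l, p + 1 + 1, s) => (l, p + 1, s + 1)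

lemma triple_eq {l l' : Multiset ℕ} {p p' s s' : ℕ} (h1 : l = l') (h2 : p = p')
    (h3 : s = s') : ((l, p, s) : S) = (l', p', s') := by
  subst h1; subst h2; subst h3; rfl

lemma fJ_zero (l : Multiset ℕ) (s : ℕ) : fJ (l, 0, s) = (l, 1, 0) := rfl
lemma fJ_succ (l : Multiset ℕ) (p s : ℕ) : fJ (l, p + 1, s) = (l, p + 1 + 1, s) := rfl
lemma fI_zero (l : Multiset ℕ) (s : ℕ) : fI (l, 0, s) = (0, 0, 0) := rfl
lemma fI_one (l : Multiset ℕ) (s : ℕ) : fI (l, 1, s) = (l + {s + 1}, 0, 0) := rfl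
lemma fI_succ (l : Multiset ℕ) (p s : ℕ) : fI (l, p + 1 + 1, s) = (l, p + 1, s + 1) := rfl

lemma fJ_iter (q : ℕ) : ∀ (p : ℕ) (l : Multiset ℕ) (s : ℕ),
    fJ^[q] (l, p + 1, s) = (l, p + 1 + q, s) := by
  induction q with
  | zero => intro p l s; rfl
  | succ q ih =>
      intro p l s
      rw [Function.iterate_succ_apply, fJ_succ, ih (p + 1) l s]
      exact triple_eq rfl (by omega) rfl

lemma fI_iter (k : ℕ) : ∀ (p : ℕ) (l : Multiset ℕ) (s : ℕ),
    fI^[k] (l, k + (p + 1), s) = (l, p + 1, s + k) := by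
  induction k with
  | zero =>
      intro p l s
      simp only [Function.iterate_zero, id_eq]
      exact triple_eq rfl (by omega) rfl
  | succ k ih =>
      intro p l s
      rw [Function.iterate_succ_apply, show k + 1 + (p + 1) = (k + p) + 1 + 1 by omega,
        fI_succ, show (k + p) + 1 = k + (p + 1) by omega, ih p l (s + 1)]
      exact triple_eq rfl rfl (by omega)

lemma fI_top (p : ℕ) (l : Multiset ℕ) (s : ℕ) :
    fI^[p + 1] (l, p + 1, s) = (l + {s + p + 1}, 0, 0) := by
  rw [Function.iterate_succ_apply', show ((l, p + 1, s) : S) = (l, p + (0 + 1), s) from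
    triple_eq rfl (by omega) rfl, fI_iter p 0 l s,
    show ((l, 0 + 1, s + p) : S) = (l, 1, s + p) from triple_eq rfl (by omega) rfl, fI_one]

lemma fI_dead0 (k : ℕ) : ∀ (l : Multiset ℕ) (s : ℕ),
    fI^[k + 1] (l, 0, s) = ((0 : Multiset ℕ), 0, 0) := by
  induction k with
  | zero => intro l s; rw [Function.iterate_one, fI_zero]
  | succ k ih =>
      intro l s
      rw [Function.iterate_succ_apply, fI_zero]
      exact ih 0 0

lemma fI_deadtop (p k : ℕ) (l : Multiset ℕ) (s : ℕ) :
    fI^[(p + 1) + (k + 1)] (l, p + 1, s) = ((0 : Multiset ℕ), 0, 0) := by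
  rw [show (p + 1) + (k + 1) = (k + 1) + (p + 1) by omega, Function.iterate_add_apply,
    fI_top p l s]
  exact fI_dead0 k _ _

lemma fJ_iter0 (q : ℕ) (l : Multiset ℕ) (s : ℕ) :
    fJ^[q + 1] (l, 0, s) = (l, q + 1, 0) := by
  rw [Function.iterate_succ_apply, fJ_zero,
    show ((l, 1, 0) : S) = (l, 0 + 1, 0) from triple_eq rfl (by omega) rfl, fJ_iter q 0 l 0]
  exact triple_eq rfl (by omega) rfl

/-- preprojective relation at state level -/
lemma state1 (m : ℕ) (x : S) :
    fI^[m] (fJ^[m + 1] (fI^[m + 1] (fJ^[m + 2] x))) =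
      fI^[2 * m + 1] (fJ^[2 * m + 3] x) := by
  obtain ⟨l, p, s⟩ := x
  rcases p with _ | p
  · have h1 : fJ^[m + 2] ((l, 0, s) : S) = (l, (m + 1) + (0 + 1), 0) :=
      (fJ_iter0 (m + 1) l s).trans (triple_eq rfl (by omega) rfl)
    have h2 : fI^[m + 1] ((l, (m + 1) + (0 + 1), 0) : S) = (l, 0 + 1, 0 + (m + 1)) :=
      fI_iter (m + 1) 0 l 0
    have h3 : fJ^[m + 1] ((l, 0 + 1, 0 + (m + 1)) : S) = (l, m + (1 + 1), 0 + (m + 1)) :=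
      (fJ_iter (m + 1) 0 l (0 + (m + 1))).trans (triple_eq rfl (by omega) rfl)
    have h4 : fI^[m] ((l, m + (1 + 1), 0 + (m + 1)) : S) = (l, 1 + 1, 0 + (m + 1) + m) :=
      fI_iter m 1 l (0 + (m + 1))
    have g1 : fJ^[2 * m + 3] ((l, 0, s) : S) = (l, (2 * m + 1) + (1 + 1), 0) :=
      (fJ_iter0 (2 * m + 2) l s).trans (triple_eq rfl (by omega) rfl)
    have g2 : fI^[2 * m + 1] ((l, (2 * m + 1) + (1 + 1), 0) : S) = (l, 1 + 1, 0 + (2 * m + 1)) :=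
      fI_iter (2 * m + 1) 1 l 0
    rw [h1, h2, h3, h4, g1, g2]
    exact triple_eq rfl rfl (by omega)
  · have h1 : fJ^[m + 2] ((l, p + 1, s) : S) = (l, (m + 1) + ((p + 1) + 1), s) :=
      (fJ_iter (m + 2) p l s).trans (triple_eq rfl (by omega) rfl)
    have h2 : fI^[m + 1] ((l, (m + 1) + ((p + 1) + 1), s) : S) = (l, (p + 1) + 1, s + (m + 1)) :=
      fI_iter (m + 1) (p + 1) l s
    have h3 : fJ^[m + 1] ((l, (p + 1) + 1, s + (m + 1)) : S) =
        (l, m + ((p + 2) + 1), s + (m + 1)) :=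
      (fJ_iter (m + 1) (p + 1) l (s + (m + 1))).trans (triple_eq rfl (by omega) rfl)
    have h4 : fI^[m] ((l, m + ((p + 2) + 1), s + (m + 1)) : S) =
        (l, (p + 2) + 1, s + (m + 1) + m) :=
      fI_iter m (p + 2) l (s + (m + 1))
    have g1 : fJ^[2 * m + 3] ((l, p + 1, s) : S) = (l, (2 * m + 1) + ((p + 2) + 1), s) :=
      (fJ_iter (2 * m + 3) p l s).trans (triple_eq rfl (by omega) rfl)
    have g2 : fI^[2 * m + 1] ((l, (2 * m + 1) + ((p + 2) + 1), s) : S) =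
        (l, (p + 2) + 1, s + (2 * m + 1)) :=
      fI_iter (2 * m + 1) (p + 2) l s
    rw [h1, h2, h3, h4, g1, g2]
    exact triple_eq rfl rfl (by omega)

/-- preinjective relation at state level -/
lemma state2 (n : ℕ) (x : S) :
    fI^[n + 2] (fJ^[n + 1] (fI^[n + 1] (fJ^[n] x))) =
      fI^[2 * n + 3] (fJ^[2 * n + 1] x) := by
  obtain ⟨l, p, s⟩ := x
  rcases p with _ | _ | _ | p
  · -- p = 0
    have key1 : fI^[n + 1] (fJ^[n] ((l, 0, s) : S)) = ((0 : Multiset ℕ), 0, 0) := by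
      rcases n with _ | n
      · exact fI_dead0 0 l s
      · rw [fJ_iter0 n l s, show (n + 1) + 1 = (0 + 1) + (n + 1) by omega,
          Function.iterate_add_apply, fI_top n l 0]
        exact fI_dead0 0 _ _
    have h3 : fJ^[n + 1] (((0 : Multiset ℕ), 0, 0) : S) = ((0 : Multiset ℕ), n + 1, 0) :=
      fJ_iter0 n 0 0
    have h4 : fI^[n + 2] (((0 : Multiset ℕ), n + 1, 0) : S) = ((0 : Multiset ℕ), 0, 0) := by
      have := fI_deadtop n 0 (0 : Multiset ℕ) 0
      rwa [show (n + 1) + (0 + 1) = n + 2 by omega] at this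
    have g1 : fJ^[2 * n + 1] ((l, 0, s) : S) = (l, 2 * n + 1, 0) := fJ_iter0 (2 * n) l s
    have g2 : fI^[2 * n + 3] ((l, 2 * n + 1, 0) : S) = ((0 : Multiset ℕ), 0, 0) := by
      have := fI_deadtop (2 * n) 1 l 0
      rwa [show (2 * n + 1) + (1 + 1) = 2 * n + 3 by omega] at this
    rw [key1, h3, h4, g1, g2]
  · -- p = 1
    have h1 : fJ^[n] ((l, 1, s) : S) = (l, n + 1, s) := by
      rcases n with _ | n
      · rfl
      · exact (fJ_iter (n + 1) 0 l s).trans (triple_eq rfl (by omega) rfl)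
    have h2 : fI^[n + 1] ((l, n + 1, s) : S) = (l + {s + n + 1}, 0, 0) := fI_top n l s
    have h3 : fJ^[n + 1] ((l + {s + n + 1}, 0, 0) : S) = (l + {s + n + 1}, n + 1, 0) :=
      fJ_iter0 n _ _
    have h4 : fI^[n + 2] ((l + {s + n + 1}, n + 1, 0) : S) = ((0 : Multiset ℕ), 0, 0) := by
      have := fI_deadtop n 0 (l + {s + n + 1}) 0
      rwa [show (n + 1) + (0 + 1) = n + 2 by omega] at this
    have g1 : fJ^[2 * n + 1] ((l, 1, s) : S) = (l, (2 * n + 1) + 1, s) :=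
      (fJ_iter (2 * n + 1) 0 l s).trans (triple_eq rfl (by omega) rfl)
    have g2 : fI^[2 * n + 3] ((l, (2 * n + 1) + 1, s) : S) = ((0 : Multiset ℕ), 0, 0) := by
      have := fI_deadtop (2 * n + 1) 0 l s
      rwa [show ((2 * n + 1) + 1) + (0 + 1) = 2 * n + 3 by omega] at this
    rw [h1, h2, h3, h4, g1, g2]
  · -- p = 2
    have h1 : fJ^[n] ((l, 2, s) : S) = (l, (n + 1) + (0 + 1), s) := by
      rcases n with _ | n
      · exact triple_eq rfl (by omega) rfl
      · exact (fJ_iter (n + 1) 1 l s).trans (triple_eq rfl (by omega) rfl)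
    have h2 : fI^[n + 1] ((l, (n + 1) + (0 + 1), s) : S) = (l, 0 + 1, s + (n + 1)) :=
      fI_iter (n + 1) 0 l s
    have h3 : fJ^[n + 1] ((l, 0 + 1, s + (n + 1)) : S) = (l, (n + 1) + 1, s + (n + 1)) :=
      (fJ_iter (n + 1) 0 l (s + (n + 1))).trans (triple_eq rfl (by omega) rfl)
    have h4 : fI^[n + 2] ((l, (n + 1) + 1, s + (n + 1)) : S) =
        (l + {s + (n + 1) + (n + 1) + 1}, 0, 0) := fI_top (n + 1) l (s + (n + 1))
    have g1 : fJ^[2 * n + 1] ((l, 2, s) : S) = (l, (2 * n + 2) + 1, s) :=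
      (fJ_iter (2 * n + 1) 1 l s).trans (triple_eq rfl (by omega) rfl)
    have g2 : fI^[2 * n + 3] ((l, (2 * n + 2) + 1, s) : S) = (l + {s + (2 * n + 2) + 1}, 0, 0) :=
      fI_top (2 * n + 2) l s
    rw [h1, h2, h3, h4, g1, g2]
    refine triple_eq ?_ rfl rfl
    rw [show s + (n + 1) + (n + 1) + 1 = s + (2 * n + 2) + 1 by omega]
  · -- p = p' + 3
    have h1 : fJ^[n] ((l, p + 3, s) : S) = (l, (n + 1) + ((p + 1) + 1), s) := by
      rcases n with _ | n
      · exact triple_eq rfl (by omega) rfl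
      · exact (fJ_iter (n + 1) (p + 2) l s).trans (triple_eq rfl (by omega) rfl)
    have h2 : fI^[n + 1] ((l, (n + 1) + ((p + 1) + 1), s) : S) = (l, (p + 1) + 1, s + (n + 1)) :=
      fI_iter (n + 1) (p + 1) l s
    have h3 : fJ^[n + 1] ((l, (p + 1) + 1, s + (n + 1)) : S) =
        (l, (n + 2) + (p + 1), s + (n + 1)) :=
      (fJ_iter (n + 1) (p + 1) l (s + (n + 1))).trans (triple_eq rfl (by omega) rfl)
    have h4 : fI^[n + 2] ((l, (n + 2) + (p + 1), s + (n + 1)) : S) =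
        (l, p + 1, s + (n + 1) + (n + 2)) := fI_iter (n + 2) p l (s + (n + 1))
    have g1 : fJ^[2 * n + 1] ((l, p + 3, s) : S) = (l, (2 * n + 3) + (p + 1), s) :=
      (fJ_iter (2 * n + 1) (p + 2) l s).trans (triple_eq rfl (by omega) rfl)
    have g2 : fI^[2 * n + 3] ((l, (2 * n + 3) + (p + 1), s) : S) =
        (l, p + 1, s + (2 * n + 3)) := fI_iter (2 * n + 3) p l s
    rw [h1, h2, h3, h4, g1, g2]
    exact triple_eq rfl rfl (by omega)

/-- delta commutation at state level -/
lemma state3 (m n : ℕ) (x : S) :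
    fI^[m + 1] (fJ^[m + 1] (fI^[n + 1] (fJ^[n + 1] x))) =
      fI^[n + 1] (fJ^[n + 1] (fI^[m + 1] (fJ^[m + 1] x))) := by
  obtain ⟨l, p, s⟩ := x
  have delta : ∀ (k : ℕ) (l' : Multiset ℕ) (p' s' : ℕ),
      fI^[k + 1] (fJ^[k + 1] ((l', p', s') : S)) =
        if p' = 0 then (l' + {k + 1}, 0, 0) else (l', p', s' + (k + 1)) := by
    intro k l' p' s'
    rcases p' with _ | p'
    · rw [fJ_iter0 k l' s', fI_top k l' 0, if_pos rfl]
      exact triple_eq (by rw [Nat.zero_add]) rfl rfl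
    · rw [if_neg (Nat.succ_ne_zero p')]
      have h1 : fJ^[k + 1] ((l', p' + 1, s') : S) = (l', (k + 1) + (p' + 1), s') :=
        (fJ_iter (k + 1) p' l' s').trans (triple_eq rfl (by omega) rfl)
      rw [h1, fI_iter (k + 1) p' l' s']
  rw [delta n l p s, delta m l p s]
  rcases p with _ | p
  · rw [if_pos rfl, if_pos rfl, delta m (l + {n + 1}) 0 0, delta n (l + {m + 1}) 0 0,
      if_pos rfl, if_pos rfl]
    exact triple_eq (add_right_comm l {n + 1} {m + 1}) rfl rfl
  · rw [if_neg (Nat.succ_ne_zero p), if_neg (Nat.succ_ne_zero p),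
      delta m l (p + 1) (s + (n + 1)), delta n l (p + 1) (s + (m + 1)),
      if_neg (Nat.succ_ne_zero p), if_neg (Nat.succ_ne_zero p)]
    exact triple_eq rfl rfl (by omega)

noncomputable section

abbrev W : Type := S →₀ ℚ

def rI : Module.End ℚ W := Finsupp.lmapDomain ℚ ℚ fI
def rJ : Module.End ℚ W := Finsupp.lmapDomain ℚ ℚ fJ

lemma rI_single (x : S) (r : ℚ) : rI (Finsupp.single x r) = Finsupp.single (fI x) r := by
  simp [rI, Finsupp.lmapDomain_apply, Finsupp.mapDomain_single]

lemma rJ_single (x : S) (r : ℚ) : rJ (Finsupp.single x r) = Finsupp.single (fJ x) r := by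
  simp [rJ, Finsupp.lmapDomain_apply, Finsupp.mapDomain_single]

lemma rI_pow_single (k : ℕ) (x : S) (r : ℚ) :
    (rI ^ k) (Finsupp.single x r) = Finsupp.single (fI^[k] x) r := by
  induction k generalizing x with
  | zero => simp
  | succ k ih =>
      rw [pow_succ, Module.End.mul_apply, rI_single, ih (fI x), ← Function.iterate_succ_apply]

lemma rJ_pow_single (k : ℕ) (x : S) (r : ℚ) :
    (rJ ^ k) (Finsupp.single x r) = Finsupp.single (fJ^[k] x) r := by
  induction k generalizing x with
  | zero => simp
  | succ k ih =>
      rw [pow_succ, Module.End.mul_apply, rJ_single, ih (fJ x), ← Function.iterate_succ_apply]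

end

end KQAux

namespace KQAux

open MvPolynomial

noncomputable section

abbrev sQ : Type := {k : ℕ // 1 ≤ k}

/-- the representation of the free algebra -/
def Phi : FreeAlgebra ℚ (Fin 2) →ₐ[ℚ] Module.End ℚ W :=
  FreeAlgebra.lift ℚ ![rI, rJ]

lemma Phi_i : Phi (FreeAlgebra.ι ℚ (0 : Fin 2)) = rI := by
  simp [Phi]

lemma Phi_j : Phi (FreeAlgebra.ι ℚ (1 : Fin 2)) = rJ := by
  simp [Phi]

lemma rel_holds : ∀ ⦃x y⦄, KroneckerRel0 x y → Phi x = Phi y := by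
  intro x y h
  induction h with
  | preproj m =>
      simp only [map_mul, map_pow, Phi_i, Phi_j]
      refine Finsupp.lhom_ext fun x r => ?_
      simp only [Module.End.mul_apply, rI_pow_single, rJ_pow_single]
      rw [state1 m x]
  | preinj n =>
      simp only [map_mul, map_pow, Phi_i, Phi_j]
      refine Finsupp.lhom_ext fun x r => ?_
      simp only [Module.End.mul_apply, rI_pow_single, rJ_pow_single]
      rw [state2 n x]
  | deltaComm m n hm hn =>
      simp only [map_mul, map_pow, Phi_i, Phi_j]
      refine Finsupp.lhom_ext fun x r => ?_
      simp only [Module.End.mul_apply, rI_pow_single, rJ_pow_single]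
      obtain ⟨m', rfl⟩ : ∃ m', m = m' + 1 := ⟨m - 1, by omega⟩
      obtain ⟨n', rfl⟩ : ∃ n', n = n' + 1 := ⟨n - 1, by omega⟩
      rw [state3 m' n' x]

/-- the representation of `A0` -/
def phi : A0 →ₐ[ℚ] Module.End ℚ W :=
  RingQuot.liftAlgHom ℚ ⟨Phi, rel_holds⟩

lemma phi_iA : phi iA = rI := by
  rw [iA, phi, RingQuot.liftAlgHom_mkAlgHom_apply, Phi_i]

lemma phi_jA : phi jA = rJ := by
  rw [jA, phi, RingQuot.liftAlgHom_mkAlgHom_apply, Phi_j]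

lemma dstate (v : ℕ) (l : Multiset ℕ) :
    fI^[v + 1] (fJ^[v + 1] ((l, 0, 0) : S)) = (l + {v + 1}, 0, 0) := by
  rw [fJ_iter0 v l 0, fI_top v l 0]
  exact triple_eq (by rw [Nat.zero_add]) rfl rfl

lemma delta_op (v : ℕ) (l : Multiset ℕ) (c : ℚ) :
    phi (iA ^ (v + 1) * jA ^ (v + 1)) (Finsupp.single ((l, 0, 0) : S) c) =
      Finsupp.single ((l + {v + 1}, 0, 0) : S) c := by
  rw [map_mul, map_pow, map_pow, phi_iA, phi_jA, Module.End.mul_apply, rJ_pow_single,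
    rI_pow_single, dstate]

lemma delta_op_pow (v n : ℕ) (l : Multiset ℕ) (c : ℚ) :
    phi ((iA ^ (v + 1) * jA ^ (v + 1)) ^ n) (Finsupp.single ((l, 0, 0) : S) c) =
      Finsupp.single ((l + Multiset.replicate n (v + 1), 0, 0) : S) c := by
  induction n generalizing l with
  | zero => simp
  | succ n ih =>
      rw [pow_succ, map_mul, Module.End.mul_apply, delta_op, ih (l + {v + 1})]
      congr 1
      refine triple_eq ?_ rfl rfl
      rw [add_assoc, Multiset.singleton_add, ← Multiset.replicate_succ]

def toMul (d : sQ →₀ ℕ) : Multiset ℕ := d.sum fun a n => Multiset.replicate n (a : ℕ)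

lemma toMul_zero : toMul 0 = 0 := Finsupp.sum_zero_index

lemma toMul_single (a : sQ) (n : ℕ) : toMul (Finsupp.single a n) = Multiset.replicate n (a : ℕ) :=
  Finsupp.sum_single_index (Multiset.replicate_zero _)

lemma toMul_add (d₁ d₂ : sQ →₀ ℕ) : toMul (d₁ + d₂) = toMul d₁ + toMul d₂ :=
  Finsupp.sum_add_index' (fun _ => Multiset.replicate_zero _)
    (fun a m n => Multiset.replicate_add m n (a : ℕ))

lemma count_toMul (d : sQ →₀ ℕ) (a : sQ) : Multiset.count (a : ℕ) (toMul d) = d a := by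
  classical
  rw [toMul, Finsupp.sum, Multiset.count_sum']
  have h1 : ∀ x ∈ d.support,
      Multiset.count (a : ℕ) (Multiset.replicate (d x) (x : ℕ)) =
        if x = a then d x else 0 := by
    intro x _
    rw [Multiset.count_replicate]
    exact if_congr Subtype.coe_inj rfl rfl
  rw [Finset.sum_congr rfl h1, Finset.sum_ite_eq' d.support a (fun x => d x)]
  by_cases hd : a ∈ d.support
  · rw [if_pos hd]
  · rw [if_neg hd, eq_comm]
    exact Finsupp.notMem_support_iff.mp hd

lemma toMul_inj : Function.Injective toMul := by
  intro d₁ d₂ h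
  ext a
  rw [← count_toMul d₁ a, ← count_toMul d₂ a, h]

def e0 : W := Finsupp.single (((0 : Multiset ℕ), 0, 0) : S) 1

/-- commutation of the deltas in `A0` -/
lemma deltaCommA0 (m n : ℕ) (hm : 1 ≤ m) (hn : 1 ≤ n) :
    (iA ^ m * jA ^ m) * (iA ^ n * jA ^ n) = (iA ^ n * jA ^ n) * (iA ^ m * jA ^ m) := by
  have h := RingQuot.mkAlgHom_rel ℚ (KroneckerRel0.deltaComm m n hm hn)
  simp only [map_mul, map_pow] at h
  simpa only [iA, jA] using h

def dSet : Set A0 := {x : A0 | ∃ m : ℕ, 1 ≤ m ∧ x = iA ^ m * jA ^ m}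

lemma dSet_comm : ∀ a ∈ dSet, ∀ b ∈ dSet, a * b = b * a := by
  rintro a ⟨m, hm, rfl⟩ b ⟨n, hn, rfl⟩
  exact deltaCommA0 m n hm hn

instance : CommRing (Algebra.adjoin ℚ dSet) := Algebra.adjoinCommRingOfComm ℚ dSet_comm

def gB : sQ → Algebra.adjoin ℚ dSet := fun k =>
  ⟨iA ^ (k : ℕ) * jA ^ (k : ℕ), Algebra.subset_adjoin ⟨(k : ℕ), k.2, rfl⟩⟩

def fA : MvPolynomial sQ ℚ →ₐ[ℚ] A0 :=
  (Algebra.adjoin ℚ dSet).val.comp (MvPolynomial.aeval gB)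

lemma fA_X (a : sQ) : fA (X a) = iA ^ (a : ℕ) * jA ^ (a : ℕ) := by
  simp [fA, gB]

lemma key_monomial (d : sQ →₀ ℕ) (c : ℚ) :
    phi (fA (monomial d c)) e0 = Finsupp.single ((toMul d, 0, 0) : S) c := by
  induction d using Finsupp.induction with
  | zero =>
      rw [toMul_zero, monomial_zero', ← MvPolynomial.algebraMap_eq, AlgHom.commutes,
        AlgHom.commutes, e0]
      rw [Module.algebraMap_end_apply, Finsupp.smul_single, smul_eq_mul, mul_one]
  | single_add a n d ha hn ih =>
      have hm : monomial (Finsupp.single a n + d) c = X a ^ n * monomial d c := by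
        rw [X_pow_eq_monomial, monomial_mul, one_mul]
      obtain ⟨v, hv⟩ : ∃ v, (a : ℕ) = v + 1 := ⟨(a : ℕ) - 1, by have := a.2; omega⟩
      rw [hm, map_mul, map_mul, Module.End.mul_apply, ih, map_pow, fA_X a, hv,
        delta_op_pow v n (toMul d) c]
      congr 1
      refine triple_eq ?_ rfl rfl
      rw [toMul_add, toMul_single, hv, add_comm]

lemma fA_inj : Function.Injective fA := by
  classical
  rw [injective_iff_map_eq_zero]
  intro P hP
  have h0 : phi (fA P) e0 = 0 := by rw [hP]; simp
  have hexp : phi (fA P) e0 =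
      ∑ d ∈ P.support, Finsupp.single ((toMul d, 0, 0) : S) (MvPolynomial.coeff d P) := by
    conv_lhs => rw [P.as_sum]
    rw [map_sum, map_sum, LinearMap.sum_apply]
    exact Finset.sum_congr rfl fun d _ => key_monomial d _
  rw [hexp] at h0
  ext d
  rw [MvPolynomial.coeff_zero]
  by_cases hd : d ∈ P.support
  · have h1 := congrArg (fun w : W => w ((toMul d, 0, 0) : S)) h0
    simp only [Finsupp.finset_sum_apply, Finsupp.coe_zero, Pi.zero_apply] at h1
    rw [Finset.sum_eq_single_of_mem d hd (fun d' _ hne => by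
      rw [Finsupp.single_apply, if_neg (fun hGd => hne (toMul_inj
        (congrArg Prod.fst hGd)))])] at h1
    rwa [Finsupp.single_eq_same] at h1
  · exact MvPolynomial.notMem_support_iff.mp hd

lemma fA_range : fA.range = Algebra.adjoin ℚ dSet := by
  rw [fA, AlgHom.range_comp, ← Algebra.adjoin_range_eq_range_aeval, AlgHom.map_adjoin]
  congr 1
  ext x
  constructor
  · rintro ⟨y, ⟨k, rfl⟩, rfl⟩
    exact ⟨(k : ℕ), k.2, rfl⟩
  · rintro ⟨m, hm, rfl⟩
    exact ⟨gB ⟨m, hm⟩, ⟨⟨m, hm⟩, rfl⟩, rfl⟩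

end

end KQAux

/-- The elements `δ_m = i^m j^m` of `A₀` (for `m ≥ 1`) pairwise commute and are
algebraically independent over `ℚ`: the unital subalgebra of `A₀` they generate
is isomorphic to a commutative polynomial ring over `ℚ` in countably many
variables, one for each `m ≥ 1`. -/
theorem deltas_polynomial_algebra :
    (∀ m n : ℕ, 1 ≤ m → 1 ≤ n →
      (iA ^ m * jA ^ m) * (iA ^ n * jA ^ n) = (iA ^ n * jA ^ n) * (iA ^ m * jA ^ m)) ∧
    ∃ f : MvPolynomial {k : ℕ // 1 ≤ k} ℚ →ₐ[ℚ] A0,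
      Function.Injective f ∧
      (∀ k : {k : ℕ // 1 ≤ k}, f (MvPolynomial.X k) = iA ^ (k : ℕ) * jA ^ (k : ℕ)) ∧
      f.range = Algebra.adjoin ℚ {x : A0 | ∃ m : ℕ, 1 ≤ m ∧ x = iA ^ m * jA ^ m} := by
  refine ⟨KQAux.deltaCommA0, KQAux.fA, KQAux.fA_inj, KQAux.fA_X, KQAux.fA_range⟩
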